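/- (Example: exact optimal inducible utility cannot be strongly induced.) Let $u^L = \begin{pmatrix} 1 & 0 \\ 0 & 1 \\ 1/2 & 1/4 \end{pmatrix}$ and $\mathbf{x}^* = (0,0,1)$. Then for every $\tilde{u}^F \in \mathbb{R}^{3\times 2}$, the profile $(\mathbf{x}^*,1)$ is not the unique SSE of the game $(u^L,\tilde{u}^F)$. -/

import Mathlib

open Finset

noncomputable section

def simplex (m : ℕ) : Set (Fin m → ℝ) := stdSimplex ℝ (Fin m)

def util {m n : ℕ} (u : Fin m → Fin n → ℝ) (y : Fin m → ℝ) (j : Fin n) : ℝ :=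
  ∑ i, y i * u i j

/-- \`(x, j)\` is a strong Stackelberg equilibrium of the game with leader matrix \`uL\`
and follower matrix \`v\`. -/
def SSE {m n : ℕ} (uL v : Fin m → Fin n → ℝ) (x : Fin m → ℝ) (j : Fin n) : Prop :=
  x ∈ simplex m ∧ (∀ ℓ, util v x ℓ ≤ util v x j) ∧
    ∀ y ∈ simplex m, ∀ ℓ, (∀ k, util v y k ≤ util v y ℓ) → util uL y ℓ ≤ util uL x j

lemma util3 (u : Fin 3 → Fin 2 → ℝ) (a b c : ℝ) (j : Fin 2) :
    util u ![a,b,c] j = a * u 0 j + b * u 1 j + c * u 2 j := by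
  simp [util, Fin.sum_univ_three]

lemma mem3 (a b c : ℝ) (ha : 0 ≤ a) (hb : 0 ≤ b) (hc : 0 ≤ c) (h : a + b + c = 1) :
    (![a,b,c] : Fin 3 → ℝ) ∈ simplex 3 := by
  constructor
  · intro i; fin_cases i <;> simpa
  · simp [Fin.sum_univ_three, h]

/-- Example: $(x^*, 1)$ cannot be strongly induced. -/
theorem stmt_18 (v : Fin 3 → Fin 2 → ℝ) :
    ¬ (SSE ![![(1:ℝ),0],![0,1],![1/2,1/4]] v ![0,0,1] 0 ∧
       ∀ z ℓ, SSE ![![(1:ℝ),0],![0,1],![1/2,1/4]] v z ℓ → z = ![0,0,1] ∧ ℓ = 0) := by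
  rintro ⟨⟨hxS, hxBR, hxOpt⟩, huniq⟩
  set uL : Fin 3 → Fin 2 → ℝ := ![![(1:ℝ),0],![0,1],![1/2,1/4]] with huL
  -- leader utility at x* is 1/2
  have hx0 : util uL ![0,0,1] 0 = 1/2 := by
    rw [huL, util3]; norm_num; rfl
  by_cases hcase : util v ![(1:ℝ)/2,1/2,0] 1 ≤ util v ![(1:ℝ)/2,1/2,0] 0
  · -- (y*, 0) is also an SSE, contradicting uniqueness
    have hyS : (![(1:ℝ)/2,1/2,0] : Fin 3 → ℝ) ∈ simplex 3 := by
      apply mem3 <;> norm_num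
    have hySSE : SSE uL v ![(1:ℝ)/2,1/2,0] 0 := by
      refine ⟨hyS, ?_, ?_⟩
      · intro ℓ; fin_cases ℓ
        · exact le_refl _
        · exact hcase
      · intro y hy ℓ hℓ
        have := hxOpt y hy ℓ hℓ
        have hy0 : util uL ![(1:ℝ)/2,1/2,0] 0 = 1/2 := by
          rw [huL, util3]; norm_num
        rw [hy0]; rw [hx0] at this; exact this
    have := (huniq _ _ hySSE).1
    have := congrFun this 0
    norm_num at this
  · push_neg at hcase
    -- unique BR 1 at y*; perturb
    set a := util v ![(1:ℝ)/2,1/2,0] 1 - util v ![(1:ℝ)/2,1/2,0] 0 with ha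
    have ha0 : 0 < a := by simp [ha]; linarith
    set c := (v 1 1 - v 1 0) - (v 0 1 - v 0 0) with hc
    set δ := min (1/2 : ℝ) (a / (|c| + 1)) with hδ
    have hcpos : (0:ℝ) < |c| + 1 := by positivity
    have hδ0 : 0 < δ := lt_min (by norm_num) (by positivity)
    have hδhalf : δ ≤ 1/2 := min_le_left _ _
    have hδa : δ ≤ a / (|c| + 1) := min_le_right _ _
    have hwS : (![(1:ℝ)/2 - δ, 1/2 + δ, 0] : Fin 3 → ℝ) ∈ simplex 3 := by
      exact mem3 _ _ _ (by linarith) (by linarith) le_rfl (by ring)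
    have hBR : ∀ k, util v ![(1:ℝ)/2 - δ, 1/2 + δ, 0] k ≤ util v ![(1:ℝ)/2 - δ, 1/2 + δ, 0] 1 := by
      intro k
      fin_cases k
      · simp only [Fin.zero_eta, Fin.isValue]
        rw [util3, util3]
        have h1 : util v ![(1:ℝ)/2,1/2,0] 1 = 1/2 * v 0 1 + 1/2 * v 1 1 + 0 * v 2 1 := util3 v _ _ _ _
        have h2 : util v ![(1:ℝ)/2,1/2,0] 0 = 1/2 * v 0 0 + 1/2 * v 1 0 + 0 * v 2 0 := util3 v _ _ _ _
        have hca : -|c| ≤ c := neg_abs_le c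
        have hδc : δ * |c| ≤ a := by
          calc δ * |c| ≤ (a / (|c| + 1)) * |c| := by
                apply mul_le_mul_of_nonneg_right hδa (abs_nonneg c)
            _ ≤ a := by
                rw [div_mul_eq_mul_div, div_le_iff₀ hcpos]
                nlinarith [abs_nonneg c, ha0.le]
        have : a + δ * c ≥ 0 := by nlinarith [abs_nonneg c, hδ0.le]
        rw [ha, h1, h2] at this
        rw [hc] at this
        nlinarith
      · exact le_refl _
    have := hxOpt _ hwS 1 hBR
    rw [hx0] at this
    rw [huL, util3] at this
    norm_num at this
    linarith
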